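/- arXiv:2206.10575 — 2 statements merged into one kernel-verified Lean document; each statement's English description precedes it below -/
import Mathlib

section
/- In the barrier-KKT context, let (x^μ, λ̄, ν) be a μ-central point, and let x* ∈ 𝒞 be a solution of the variational inequality, i.e., ⟪F(x*), z − x*⟫ ≥ 0 for all z ∈ 𝒞. Suppose F is star-ξ-monotone on 𝒞 at x* with constants c > 0 and ξ > 1: ⟪F(x) − F(x*), x − x*⟫ ≥ c‖x − x*‖^ξ for all x ∈ 𝒞. Then ‖x^μ − x*‖ ≤ (m·μ/c)^{1/ξ}. -/
open scoped RealInnerProductSpace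
open Matrix

/-- The feasible set `𝒞 = {x | φ_i(x) ≤ 0 for all i, and C x = d}`. -/
def FeasSet {n m p : ℕ} (φ : Fin m → EuclideanSpace ℝ (Fin n) → ℝ)
    (C : Matrix (Fin p) (Fin n) ℝ) (d : EuclideanSpace ℝ (Fin p)) :
    Set (EuclideanSpace ℝ (Fin n)) :=
  {x | (∀ i, φ i x ≤ 0) ∧ Matrix.toEuclideanLin C x = d}

/-- A `μ`-central point `(x^μ, λ̄, ν)`: positive multipliers, stationarity, perturbed
complementarity `λ̄ᵢ φᵢ(x^μ) = −μ`, and primal feasibility `C x^μ = d`. -/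
def IsMuCentral {n m p : ℕ} (F : EuclideanSpace ℝ (Fin n) → EuclideanSpace ℝ (Fin n))
    (φ : Fin m → EuclideanSpace ℝ (Fin n) → ℝ)
    (C : Matrix (Fin p) (Fin n) ℝ) (d : EuclideanSpace ℝ (Fin p)) (μ : ℝ)
    (xμ : EuclideanSpace ℝ (Fin n)) (lamb : Fin m → ℝ)
    (ν : EuclideanSpace ℝ (Fin p)) : Prop :=
  (∀ i, 0 < lamb i) ∧
  F xμ + (∑ i, lamb i • gradient (φ i) xμ) + Matrix.toEuclideanLin Cᵀ ν = 0 ∧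
  (∀ i, lamb i * φ i xμ = -μ) ∧
  Matrix.toEuclideanLin C xμ = d

/-- First-order condition for a differentiable convex function: the graph lies above
the tangent plane. -/
lemma grad_ineq {n : ℕ} {f : EuclideanSpace ℝ (Fin n) → ℝ}
    (hconv : ConvexOn ℝ Set.univ f) (hdiff : Differentiable ℝ f)
    (x y : EuclideanSpace ℝ (Fin n)) :
    f x + ⟪gradient f x, y - x⟫ ≤ f y := by
  set v := y - x with hv
  -- the curve t ↦ x + t • v
  have hc : ∀ t : ℝ, HasDerivAt (fun t : ℝ => x + t • v) v t := fun t => by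
    simpa using ((hasDerivAt_id t).smul_const v).const_add x
  have hg : HasDerivAt (fun t : ℝ => f (x + t • v)) (fderiv ℝ f x v) 0 := by
    have hx0 : x + (0 : ℝ) • v = x := by simp
    have := ((hdiff (x + (0 : ℝ) • v)).hasFDerivAt).comp_hasDerivAt 0 (hc 0)
    rw [hx0] at this
    exact this
  have hinner : (fderiv ℝ f x) v = ⟪gradient f x, v⟫ := by
    rw [gradient]
    rw [← InnerProductSpace.toDual_apply_apply]
    simp
  -- convexity of the 1-D restriction
  have hgc : ConvexOn ℝ (Set.univ : Set ℝ) (fun t : ℝ => f (x + t • v)) := by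
    have := hconv.comp_affineMap (AffineMap.lineMap x y : ℝ →ᵃ[ℝ] EuclideanSpace ℝ (Fin n))
    have heq : (f ∘ (AffineMap.lineMap x y : ℝ →ᵃ[ℝ] EuclideanSpace ℝ (Fin n)))
        = fun t : ℝ => f (x + t • v) := by
      funext t
      simp only [Function.comp_apply, AffineMap.lineMap_apply, hv, vsub_eq_sub, vadd_eq_add]
      rw [add_comm]
    rw [heq] at this
    simpa using this
  have hslope := hgc.le_slope_of_hasDerivAt (Set.mem_univ 0) (Set.mem_univ 1)
    (by norm_num) hg
  rw [slope_def_field] at hslope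
  simp only [one_smul, zero_smul, add_zero] at hslope
  norm_num at hslope
  have : (fderiv ℝ f x) v ≤ f (x + v) - f x := hslope
  rw [hinner] at this
  have hxy : x + v = y := by rw [hv]; abel
  rw [hxy] at this
  linarith

/-- Lemma on `‖x^μ − x*‖` under star-ξ-monotonicity:
`‖x^μ − x*‖ ≤ (m μ / c)^(1/ξ)`. -/
theorem stmt_17 {n m p : ℕ}
    (φ : Fin m → EuclideanSpace ℝ (Fin n) → ℝ)
    (hφconv : ∀ i, ConvexOn ℝ Set.univ (φ i))
    (hφdiff : ∀ i, Differentiable ℝ (φ i))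
    (C : Matrix (Fin p) (Fin n) ℝ) (d : EuclideanSpace ℝ (Fin p))
    (μ : ℝ) (hμ : 0 < μ)
    (F : EuclideanSpace ℝ (Fin n) → EuclideanSpace ℝ (Fin n))
    (xμ : EuclideanSpace ℝ (Fin n)) (lamb : Fin m → ℝ) (ν : EuclideanSpace ℝ (Fin p))
    (hcentral : IsMuCentral F φ C d μ xμ lamb ν)
    (xstar : EuclideanSpace ℝ (Fin n)) (hxstar : xstar ∈ FeasSet φ C d)
    (hsol : ∀ z ∈ FeasSet φ C d, 0 ≤ ⟪F xstar, z - xstar⟫)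
    (c ξ : ℝ) (hc : 0 < c) (hξ : 1 < ξ)
    (hstar : ∀ x ∈ FeasSet φ C d, c * ‖x - xstar‖ ^ ξ ≤ ⟪F x - F xstar, x - xstar⟫) :
    ‖xμ - xstar‖ ≤ ((m : ℝ) * μ / c) ^ (1 / ξ) := by
  obtain ⟨hlamb, hstat, hcomp, hfeasC⟩ := hcentral
  -- xμ is feasible
  have hφxμ : ∀ i, φ i xμ < 0 := by
    intro i
    have h := hcomp i
    nlinarith [hlamb i, mul_pos (hlamb i) (neg_pos.mpr (show φ i xμ < 0 from by nlinarith [hlamb i]))]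
  have hfeas : xμ ∈ FeasSet φ C d := ⟨fun i => (hφxμ i).le, hfeasC⟩
  -- key inner-product bound: ⟪F xμ, xμ - x*⟫ ≤ m μ
  have hCterm : ⟪(Matrix.toEuclideanLin Cᵀ ν : EuclideanSpace ℝ (Fin n)), xμ - xstar⟫ = 0 := by
    have h1 : ⟪(Matrix.toEuclideanLin Cᵀ ν : EuclideanSpace ℝ (Fin n)), xμ - xstar⟫
        = ⟪ν, (Matrix.toEuclideanLin C (xμ - xstar) : EuclideanSpace ℝ (Fin p))⟫ := by
      simp only [Matrix.toEuclideanLin_apply, PiLp.inner_apply, RCLike.inner_apply,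
        starRingEnd_apply, star_trivial]
      simp only [Matrix.mulVec, dotProduct, Matrix.transpose_apply,
        Finset.sum_mul, Finset.mul_sum]
      rw [Finset.sum_comm]
      apply Finset.sum_congr rfl
      intro j _
      apply Finset.sum_congr rfl
      intro i _
      ring
    rw [h1, map_sub, hfeasC, hxstar.2, sub_self, inner_zero_right]
  have hgradterm : ∀ i : Fin m, -μ ≤ lamb i * ⟪gradient (φ i) xμ, xμ - xstar⟫ := by
    intro i
    have h := grad_ineq (hφconv i) (hφdiff i) xμ xstar
    have h2 : ⟪gradient (φ i) xμ, xstar - xμ⟫ = -⟪gradient (φ i) xμ, xμ - xstar⟫ := by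
      rw [← inner_neg_right]; congr 1; abel
    rw [h2] at h
    have hφs := hxstar.1 i
    have : φ i xμ - φ i xstar ≤ ⟪gradient (φ i) xμ, xμ - xstar⟫ := by linarith
    have h3 : lamb i * (φ i xμ - φ i xstar) ≤ lamb i * ⟪gradient (φ i) xμ, xμ - xstar⟫ :=
      mul_le_mul_of_nonneg_left this (hlamb i).le
    nlinarith [hcomp i, (hlamb i).le]
  have hFxμ : ⟪F xμ, xμ - xstar⟫ ≤ (m : ℝ) * μ := by
    have hstat' : F xμ = -(∑ i, lamb i • gradient (φ i) xμ) - Matrix.toEuclideanLin Cᵀ ν := by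
      have := hstat
      rw [add_assoc] at this
      linear_combination (norm := module) this
    rw [hstat']
    rw [sub_eq_add_neg, inner_add_left, inner_neg_left, inner_neg_left, hCterm, neg_zero,
      add_zero, sum_inner]
    have : ∀ i : Fin m, -μ ≤ ⟪lamb i • gradient (φ i) xμ, xμ - xstar⟫ := by
      intro i
      rw [real_inner_smul_left]
      exact hgradterm i
    have hsum : (m : ℝ) * (-μ) ≤ ∑ i, ⟪lamb i • gradient (φ i) xμ, xμ - xstar⟫ := by
      calc (m : ℝ) * (-μ) = ∑ _i : Fin m, (-μ) := by simp [mul_comm]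
        _ ≤ _ := Finset.sum_le_sum fun i _ => this i
    linarith
  -- combine
  have hmono := hstar xμ hfeas
  have hsol' := hsol xμ hfeas
  have hineq : c * ‖xμ - xstar‖ ^ ξ ≤ (m : ℝ) * μ := by
    rw [inner_sub_left] at hmono
    linarith
  have hkey : ‖xμ - xstar‖ ^ ξ ≤ (m : ℝ) * μ / c := by
    rw [le_div_iff₀ hc, mul_comm]; exact hineq
  have hξ0 : 0 < ξ := by linarith
  calc ‖xμ - xstar‖ = (‖xμ - xstar‖ ^ ξ) ^ (1 / ξ) := by
        rw [← Real.rpow_mul (norm_nonneg _), mul_one_div, div_self hξ0.ne', Real.rpow_one]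
    _ ≤ ((m : ℝ) * μ / c) ^ (1 / ξ) :=
        Real.rpow_le_rpow (Real.rpow_nonneg (norm_nonneg _) _) hkey (by positivity)
end

section
/- Let φ_1, …, φ_m : ℝⁿ → ℝ be convex and continuously differentiable, and suppose the open set C_< = {x ∈ ℝⁿ : φ_i(x) < 0 for all i} is nonempty. Fix b ∈ ℝⁿ and μ, β > 0, and define ψ : C_< → ℝ by ψ(x) = (1/2)‖x − b‖² − (μ/β)·Σ_{i=1}^m log(−φ_i(x)). Then ψ attains a global minimum over C_< at a unique point, and a point x ∈ C_< satisfies the equation x − b − (μ/β)·Σ_{i=1}^m ∇φ_i(x)/φ_i(x) = 0 if and only if x is this unique minimizer; in particular, this equation has exactly one solution in C_<. -/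
open scoped RealInnerProductSpace
open Set

private lemma oneD {g : ℝ → ℝ} (hg : ConvexOn ℝ (Set.Icc (0:ℝ) 1) g) {d : ℝ}
    (hd : HasDerivAt g d 0) : g 0 + d ≤ g 1 := by
  have hslope : ∀ t ∈ Set.Ioc (0:ℝ) 1, slope g 0 t ≤ g 1 - g 0 := by
    intro t ht
    have h01 : (0:ℝ) ∈ Set.Icc (0:ℝ) 1 := by norm_num
    have h11 : (1:ℝ) ∈ Set.Icc (0:ℝ) 1 := by norm_num
    have h := hg.2 h01 h11 (show (0:ℝ) ≤ 1 - t by linarith [ht.2]) ht.1.le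
      (show (1:ℝ) - t + t = 1 by ring)
    simp only [smul_eq_mul, mul_zero, mul_one, zero_add] at h
    rw [slope_def_field, div_le_iff₀ (by simpa using ht.1)]
    nlinarith [h]
  have htends : Filter.Tendsto (slope g 0) (nhdsWithin 0 (Set.Ioi 0)) (nhds d) :=
    (hasDerivAt_iff_tendsto_slope.mp hd).mono_left
      (nhdsWithin_mono 0 (fun x hx => by simpa using ne_of_gt hx))
  have hev : ∀ᶠ t in nhdsWithin (0:ℝ) (Set.Ioi 0), slope g 0 t ≤ g 1 - g 0 := by
    filter_upwards [Ioc_mem_nhdsGT_of_mem (by norm_num : (0:ℝ) ∈ Set.Ico (0:ℝ) 1)] with t ht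
    exact hslope t ht
  have := le_of_tendsto htends hev
  linarith

private lemma grad_ineq_s19 {E : Type*} [NormedAddCommGroup E] [InnerProductSpace ℝ E] [CompleteSpace E]
    {f : E → ℝ} {s : Set E} (hf : ConvexOn ℝ s f) {x y : E} (hx : x ∈ s) (hy : y ∈ s)
    {g : E} (hg : HasGradientAt f g x) : f x + ⟪g, y - x⟫ ≤ f y := by
  have hγ : HasDerivAt (fun t : ℝ => AffineMap.lineMap x y t) (y - x) 0 := by
    have h : HasDerivAt (fun t : ℝ => t • (y - x) + x) ((1:ℝ) • (y - x)) 0 :=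
      ((hasDerivAt_id (0:ℝ)).smul_const (y - x)).add_const x
    simpa [AffineMap.lineMap_apply, one_smul] using h
  have hcomp : HasDerivAt (f ∘ (AffineMap.lineMap x y : ℝ →ᵃ[ℝ] E))
      ((InnerProductSpace.toDual ℝ E g) (y - x)) 0 := by
    have hF : HasFDerivAt f (InnerProductSpace.toDual ℝ E g) ((AffineMap.lineMap x y : ℝ →ᵃ[ℝ] E) 0) := by
      rw [AffineMap.lineMap_apply_zero]; exact hg.hasFDerivAt
    exact hF.comp_hasDerivAt 0 hγ
  have hgconv : ConvexOn ℝ (Set.Icc (0:ℝ) 1) (f ∘ (AffineMap.lineMap x y : ℝ →ᵃ[ℝ] E)) := by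
    refine (hf.comp_affineMap (AffineMap.lineMap x y)).subset ?_ (convex_Icc 0 1)
    intro t ht
    exact hf.1.lineMap_mem hx hy ht
  have := oneD hgconv hcomp
  simpa [Function.comp, InnerProductSpace.toDual_apply_apply] using this

private lemma strictq {E : Type*} [NormedAddCommGroup E] [InnerProductSpace ℝ E] (b : E) :
    StrictConvexOn ℝ (Set.univ : Set E) (fun x => (1/2 : ℝ) * ‖x - b‖ ^ 2) := by
  refine ⟨convex_univ, ?_⟩
  intro x _ y _ hxy a c ha hc hac
  simp only [smul_eq_mul]
  have hb : a • x + c • y - b = a • (x - b) + c • (y - b) := by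
    have h : a • x + c • y - b = a • (x - b) + c • (y - b) + ((a + c) - 1) • b := by
      module
    rw [h, hac]; simp
  rw [hb]
  have h1 : ‖a • (x - b) + c • (y - b)‖ ^ 2
      = a^2*‖x - b‖^2 + 2*(a*c*⟪x - b, y - b⟫) + c^2*‖y - b‖^2 := by
    rw [norm_add_sq_real, norm_smul, norm_smul, real_inner_smul_left, real_inner_smul_right,
      Real.norm_eq_abs, Real.norm_eq_abs, mul_pow, mul_pow, sq_abs, sq_abs]
    ring
  have h2 : ‖(x - b) - (y - b)‖ ^ 2 = ‖x - b‖^2 - 2*⟪x - b, y - b⟫ + ‖y - b‖^2 := by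
    rw [norm_sub_sq_real]
  have h3 : (0:ℝ) < ‖(x - b) - (y - b)‖^2 := by
    have hne : (x - b) - (y - b) ≠ 0 := by
      intro h; apply hxy; have := sub_eq_zero.mp h; simpa [sub_left_inj] using this
    have hpos : 0 < ‖(x - b) - (y - b)‖ := norm_pos_iff.mpr hne
    positivity
  nlinarith [mul_pos ha hc]

private lemma convexOn_sum' {E : Type*} [NormedAddCommGroup E] [NormedSpace ℝ E]
    {ι : Type*} (t : Finset ι) (f : ι → E → ℝ) {s : Set E} (hs : Convex ℝ s)
    (h : ∀ i ∈ t, ConvexOn ℝ s (f i)) : ConvexOn ℝ s (fun x => ∑ i ∈ t, f i x) := by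
  induction t using Finset.cons_induction with
  | empty => simpa using convexOn_const (0:ℝ) hs
  | cons i t hit ih =>
    simp only [Finset.sum_cons]
    exact (h i (Finset.mem_cons_self i t)).add (ih fun j hj => h j (Finset.mem_cons_of_mem hj))

set_option maxHeartbeats 1000000 in
/-- Proposition on the unique solution of the proximal log-barrier
equation: `ψ(x) = (1/2)‖x − b‖² − (μ/β) Σᵢ log(−φᵢ(x))` attains a global minimum on
`C_< = {x | φᵢ(x) < 0 ∀ i}` at a unique point, and `x ∈ C_<` solves
`x − b − (μ/β) Σᵢ ∇φᵢ(x)/φᵢ(x) = 0` iff it is this minimizer. -/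
theorem stmt_19 {n m : ℕ}
    (φ : Fin m → EuclideanSpace ℝ (Fin n) → ℝ)
    (hφconv : ∀ i, ConvexOn ℝ Set.univ (φ i))
    (hφC1 : ∀ i, ContDiff ℝ 1 (φ i))
    (hne : {x : EuclideanSpace ℝ (Fin n) | ∀ i, φ i x < 0}.Nonempty)
    (b : EuclideanSpace ℝ (Fin n)) (μ β : ℝ) (hμ : 0 < μ) (hβ : 0 < β)
    (ψ : EuclideanSpace ℝ (Fin n) → ℝ)
    (hψ : ∀ x, ψ x = (1 / 2) * ‖x - b‖ ^ 2 - (μ / β) * ∑ i, Real.log (-(φ i x))) :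
    ∃ x₀ ∈ {x : EuclideanSpace ℝ (Fin n) | ∀ i, φ i x < 0},
      (∀ x ∈ {x : EuclideanSpace ℝ (Fin n) | ∀ i, φ i x < 0}, ψ x₀ ≤ ψ x) ∧
      (∀ x ∈ {x : EuclideanSpace ℝ (Fin n) | ∀ i, φ i x < 0},
        (∀ x' ∈ {x : EuclideanSpace ℝ (Fin n) | ∀ i, φ i x < 0}, ψ x ≤ ψ x') → x = x₀) ∧
      (∀ x ∈ {x : EuclideanSpace ℝ (Fin n) | ∀ i, φ i x < 0},
        (x - b - (μ / β) • ∑ i, (φ i x)⁻¹ • gradient (φ i) x = 0) ↔ x = x₀) := by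
  classical
  obtain ⟨xb, hxb⟩ := hne
  have hψfun : ψ = fun x => (1 / 2) * ‖x - b‖ ^ 2 - (μ / β) * ∑ i, Real.log (-(φ i x)) :=
    funext hψ
  subst hψfun
  set C : Set (EuclideanSpace ℝ (Fin n)) := {x | ∀ i, φ i x < 0} with hC
  set f : EuclideanSpace ℝ (Fin n) → ℝ :=
    fun x => (1 / 2) * ‖x - b‖ ^ 2 - (μ / β) * ∑ i, Real.log (-(φ i x)) with hf
  have hfx : ∀ x, f x = (1 / 2) * ‖x - b‖ ^ 2 - (μ / β) * ∑ i, Real.log (-(φ i x)) :=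
    fun x => rfl
  have hM : 0 < μ / β := div_pos hμ hβ
  clear_value f
  have hφdiff : ∀ i, Differentiable ℝ (φ i) := fun i => (hφC1 i).differentiable one_ne_zero
  have hφcont : ∀ i, Continuous (φ i) := fun i => (hφdiff i).continuous
  have hCopen : IsOpen C := by
    have h : C = ⋂ i, (φ i) ⁻¹' Set.Iio 0 := by ext z; simp [hC]
    rw [h]
    exact isOpen_iInter_of_finite fun i => (isOpen_Iio).preimage (hφcont i)
  have hCconv : Convex ℝ C := by
    have h : C = ⋂ i, {z | φ i z < 0} := by ext z; simp [hC]
    rw [h]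
    refine convex_iInter fun i => ?_
    have h2 := (hφconv i).convex_lt 0
    simpa using h2
  have hxbC : xb ∈ C := hxb
  have hgradφ : ∀ (i) (x : EuclideanSpace ℝ (Fin n)),
      HasGradientAt (φ i) (gradient (φ i) x) x :=
    fun i x => ((hφdiff i) x).hasGradientAt
  -- linear upper bounds from subgradient inequality at xb
  set K : ℝ := ∑ i, (|φ i xb| + ‖gradient (φ i) xb‖ * ‖xb‖) with hK
  set L : ℝ := ∑ i, ‖gradient (φ i) xb‖ with hL
  clear_value K L
  have hKnn : 0 ≤ K := by
    rw [hK]; exact Finset.sum_nonneg fun i _ => by positivity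
  have hLnn : 0 ≤ L := by
    rw [hL]; exact Finset.sum_nonneg fun i _ => by positivity
  have hKL_i : ∀ (i) (y : EuclideanSpace ℝ (Fin n)),
      -(φ i y) ≤ (|φ i xb| + ‖gradient (φ i) xb‖ * ‖xb‖) + ‖gradient (φ i) xb‖ * ‖y‖ := by
    intro i y
    have h := grad_ineq_s19 (hφconv i) (Set.mem_univ xb) (Set.mem_univ y) (hgradφ i xb)
    have hCS : |⟪gradient (φ i) xb, y - xb⟫| ≤ ‖gradient (φ i) xb‖ * ‖y - xb‖ :=
      abs_real_inner_le_norm _ _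
    have hn : ‖y - xb‖ ≤ ‖y‖ + ‖xb‖ := norm_sub_le _ _
    have hmul := mul_le_mul_of_nonneg_left hn (norm_nonneg (gradient (φ i) xb))
    rw [mul_add] at hmul
    have h2 := (abs_le.mp hCS).1
    linarith [neg_abs_le (φ i xb), h, h2, hmul]
  have hlog_i : ∀ (i) (y : EuclideanSpace ℝ (Fin n)), y ∈ C →
      Real.log (-(φ i y)) ≤ (|φ i xb| + ‖gradient (φ i) xb‖ * ‖xb‖)
        + ‖gradient (φ i) xb‖ * ‖y‖ := by
    intro i y hy
    have hpos : (0:ℝ) < -(φ i y) := neg_pos.mpr (hy i)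
    have h1 := Real.log_le_sub_one_of_pos hpos
    linarith [hKL_i i y]
  have hsumlog : ∀ y ∈ C, ∑ i, Real.log (-(φ i y)) ≤ K + L * ‖y‖ := by
    intro y hy
    have h : ∑ i, Real.log (-(φ i y)) ≤
        ∑ i, ((|φ i xb| + ‖gradient (φ i) xb‖ * ‖xb‖) + ‖gradient (φ i) xb‖ * ‖y‖) :=
      Finset.sum_le_sum fun i _ => hlog_i i y hy
    rw [Finset.sum_add_distrib, ← Finset.sum_mul, ← hK, ← hL] at h
    exact h
  set c : ℝ := f xb with hc
  clear_value c
  set S : Set (EuclideanSpace ℝ (Fin n)) := C ∩ f ⁻¹' Set.Iic c with hS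
  have hxbS : xb ∈ S := ⟨hxbC, hc.ge⟩
  -- bound on S
  set R : ℝ := (2 * ((μ/β) * L) + Real.sqrt (2 * |c + (μ/β) * K + (μ/β) * L * ‖b‖|) + 1) + ‖b‖
    with hR
  clear_value R
  have hbound : ∀ y ∈ S, ‖y‖ ≤ R := by
    rintro y ⟨hyC, hyc⟩
    have hyc' : f y ≤ c := hyc
    have hyn : ‖y‖ ≤ ‖y - b‖ + ‖b‖ := by
      have h := norm_add_le (y - b) b
      simpa using h
    have hsum := hsumlog y hyC
    have hmul := mul_le_mul_of_nonneg_left hsum hM.le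
    rw [hfx y] at hyc'
    set γ : ℝ := (μ/β) * L with hγ
    clear_value γ
    have hγnn : 0 ≤ γ := by rw [hγ]; exact mul_nonneg hM.le hLnn
    set α : ℝ := c + (μ/β) * K + γ * ‖b‖ with hα
    clear_value α
    have h1 : (1/2) * ‖y - b‖^2 ≤ α + γ * ‖y - b‖ := by
      rw [hα]
      have h2 : (μ/β) * (K + L * ‖y‖) = (μ/β) * K + γ * ‖y‖ := by rw [hγ]; ring
      have h3 : γ * ‖y‖ ≤ γ * ‖y - b‖ + γ * ‖b‖ := by
        have := mul_le_mul_of_nonneg_left hyn hγnn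
        linarith [this, mul_add γ ‖y - b‖ ‖b‖]
      nlinarith [hmul, hyc', h2, h3]
    set s : ℝ := Real.sqrt (2 * |α|) with hsdef
    clear_value s
    have hs0 : 0 ≤ s := by rw [hsdef]; exact Real.sqrt_nonneg _
    have hs2 : s ^ 2 = 2 * |α| := by rw [hsdef]; exact Real.sq_sqrt (by positivity)
    have hrb : ‖y - b‖ ≤ 2 * γ + s + 1 := by
      by_contra hcon
      push_neg at hcon
      have hr0 := norm_nonneg (y - b)
      have habs : 2 * α ≤ s ^ 2 := by rw [hs2]; linarith [le_abs_self α]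
      have hq2 : ‖y - b‖ * (‖y - b‖ - 2 * γ) ≤ s ^ 2 := by
        have hexp : ‖y - b‖ * (‖y - b‖ - 2 * γ) = ‖y - b‖ ^ 2 - 2 * (γ * ‖y - b‖) := by ring
        rw [hexp]; linarith
      have hA : s + 1 < ‖y - b‖ - 2 * γ := by linarith
      have hB : s + 1 < ‖y - b‖ := by linarith
      have hC : (s + 1) * (s + 1) < ‖y - b‖ * (‖y - b‖ - 2 * γ) :=
        mul_lt_mul'' hB hA (by linarith) (by linarith)
      nlinarith [hC, hq2, hs0]
    calc ‖y‖ ≤ ‖y - b‖ + ‖b‖ := hyn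
      _ ≤ (2 * γ + s + 1) + ‖b‖ := by linarith
      _ = R := by rw [hR, hγ, hsdef, hα]
  -- lower bound on each -(φ i y) over S
  set D : ℝ := c / (μ/β) + K + L * R with hD
  clear_value D
  have hlogLB : ∀ y ∈ S, ∀ i, -D ≤ Real.log (-(φ i y)) := by
    rintro y ⟨hyC, hyc⟩ i
    have hyc' : f y ≤ c := hyc
    have hRy := hbound y ⟨hyC, hyc⟩
    rw [hfx y] at hyc'
    have h1 : -c ≤ (μ/β) * ∑ j, Real.log (-(φ j y)) := by nlinarith [sq_nonneg ‖y - b‖]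
    have h2 : ∑ j ∈ Finset.univ.erase i, Real.log (-(φ j y)) ≤ K + L * R := by
      have ha : ∑ j ∈ Finset.univ.erase i, Real.log (-(φ j y)) ≤
          ∑ j ∈ Finset.univ.erase i,
            ((|φ j xb| + ‖gradient (φ j) xb‖ * ‖xb‖) + ‖gradient (φ j) xb‖ * ‖y‖) :=
        Finset.sum_le_sum fun j _ => hlog_i j y hyC
      have hb2 : ∑ j ∈ Finset.univ.erase i,
            ((|φ j xb| + ‖gradient (φ j) xb‖ * ‖xb‖) + ‖gradient (φ j) xb‖ * ‖y‖) ≤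
          ∑ j, ((|φ j xb| + ‖gradient (φ j) xb‖ * ‖xb‖) + ‖gradient (φ j) xb‖ * ‖y‖) :=
        Finset.sum_le_sum_of_subset_of_nonneg (Finset.subset_univ _)
          (fun j _ _ => by positivity)
      have hb3 : ∑ j, ((|φ j xb| + ‖gradient (φ j) xb‖ * ‖xb‖) + ‖gradient (φ j) xb‖ * ‖y‖)
          = K + L * ‖y‖ := by
        rw [Finset.sum_add_distrib, ← Finset.sum_mul, ← hK, ← hL]
      have hb4 : K + L * ‖y‖ ≤ K + L * R := by
        have := mul_le_mul_of_nonneg_left hRy hLnn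
        linarith
      linarith
    have h3 : ∑ j, Real.log (-(φ j y))
        = Real.log (-(φ i y)) + ∑ j ∈ Finset.univ.erase i, Real.log (-(φ j y)) :=
      (Finset.add_sum_erase _ _ (Finset.mem_univ i)).symm
    have h4 : -c / (μ/β) ≤ ∑ j, Real.log (-(φ j y)) := by
      rw [div_le_iff₀ hM]
      nlinarith [h1]
    have hrw : -c / (μ/β) = -(c / (μ/β)) := by ring
    rw [hrw] at h4
    rw [hD, neg_add, neg_add]
    linarith [h2, h4, h3.le]
  set ε : ℝ := Real.exp (-D) with hε
  clear_value ε
  have hεpos : 0 < ε := by rw [hε]; exact Real.exp_pos _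
  have hφle : ∀ y ∈ S, ∀ i, φ i y ≤ -ε := by
    intro y hy i
    have hpos : (0:ℝ) < -(φ i y) := neg_pos.mpr (hy.1 i)
    have h := Real.exp_le_exp.mpr (hlogLB y hy i)
    rw [Real.exp_log hpos] at h
    rw [hε] at *
    linarith
  -- the closed set T
  set T : Set (EuclideanSpace ℝ (Fin n)) := ⋂ i, (φ i) ⁻¹' Set.Iic (-ε) with hT
  have hTclosed : IsClosed T :=
    isClosed_iInter fun i => isClosed_Iic.preimage (hφcont i)
  have hTC : T ⊆ C := by
    intro y hy i
    have h : φ i y ≤ -ε := Set.mem_iInter.mp hy i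
    linarith
  have hcontT : ContinuousOn f T := by
    rw [hf]
    apply ContinuousOn.sub
    · exact (continuous_const.mul (((continuous_id.sub continuous_const).norm).pow 2)).continuousOn
    · apply ContinuousOn.mul continuousOn_const
      apply continuousOn_finset_sum
      intro i _
      intro y hy
      have hne0 : -(φ i y) ≠ 0 := by
        have h : φ i y ≤ -ε := Set.mem_iInter.mp hy i
        intro h0; rw [neg_eq_zero] at h0; rw [h0] at h; linarith
      exact (((hφcont i).continuousAt.neg.log hne0)).continuousWithinAt
  have hSsub : S ⊆ T := fun y hy => Set.mem_iInter.mpr fun i => hφle y hy i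
  have hSeq : S = (Metric.closedBall (0 : EuclideanSpace ℝ (Fin n)) R) ∩ (T ∩ f ⁻¹' Set.Iic c) := by
    ext y
    constructor
    · intro hy
      exact ⟨mem_closedBall_zero_iff.mpr (hbound y hy), hSsub hy, hy.2⟩
    · rintro ⟨-, hyT, hyc⟩
      exact ⟨hTC hyT, hyc⟩
  have hclosed : IsClosed (T ∩ f ⁻¹' Set.Iic c) :=
    hcontT.preimage_isClosed_of_isClosed hTclosed isClosed_Iic
  have hScompact : IsCompact S := by
    rw [hSeq]
    exact (isCompact_closedBall _ _).inter_right hclosed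
  obtain ⟨x₀, hx₀S, hx₀min⟩ :=
    hScompact.exists_isMinOn ⟨xb, hxbS⟩ (hcontT.mono hSsub)
  have hx₀C : x₀ ∈ C := hx₀S.1
  have hminC : ∀ x ∈ C, f x₀ ≤ f x := by
    intro x hx
    by_cases hxc : f x ≤ c
    · exact isMinOn_iff.mp hx₀min x ⟨hx, hxc⟩
    · push_neg at hxc
      calc f x₀ ≤ f xb := isMinOn_iff.mp hx₀min xb hxbS
        _ = c := hc.symm
        _ ≤ f x := hxc.le
  -- strict convexity of f on C
  have hbar : ∀ i, ConvexOn ℝ C (fun x => -Real.log (-(φ i x))) := by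
    intro i
    refine ⟨hCconv, ?_⟩
    intro x hx y hy a cc ha hcc hacc
    have hu : (0:ℝ) < -(φ i x) := neg_pos.2 (hx i)
    have hv : (0:ℝ) < -(φ i y) := neg_pos.2 (hy i)
    have hφmid : φ i (a • x + cc • y) ≤ a * φ i x + cc * φ i y := by
      have h := (hφconv i).2 (Set.mem_univ x) (Set.mem_univ y) ha hcc hacc
      simpa using h
    have hmix : (0:ℝ) < a * -(φ i x) + cc * -(φ i y) := by
      rcases ha.lt_or_eq with hapos | haz
      · have hp1 := mul_pos hapos hu
        have hp2 := mul_nonneg hcc hv.le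
        linarith
      · have hcc1 : cc = 1 := by linarith
        rw [← haz, hcc1]
        simpa using hv
    have h1 : Real.log (a * -(φ i x) + cc * -(φ i y)) ≤ Real.log (-(φ i (a • x + cc • y))) :=
      Real.log_le_log hmix (by linarith)
    have h2 : a * Real.log (-(φ i x)) + cc * Real.log (-(φ i y)) ≤
        Real.log (a * -(φ i x) + cc * -(φ i y)) := by
      have h := (strictConcaveOn_log_Ioi.concaveOn).2 (Set.mem_Ioi.mpr hu)
        (Set.mem_Ioi.mpr hv) ha hcc hacc
      simpa using h
    simp only [smul_eq_mul]
    linarith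
  have hsumbar : ConvexOn ℝ C (fun x => (μ/β) * ∑ i, -Real.log (-(φ i x))) := by
    have h := (convexOn_sum' Finset.univ (fun i (x : EuclideanSpace ℝ (Fin n)) =>
      -Real.log (-(φ i x))) hCconv (fun i _ => hbar i)).smul hM.le
    simpa [smul_eq_mul] using h
  have hstrict : StrictConvexOn ℝ C f := by
    have hq := (strictq b).subset (Set.subset_univ C) hCconv
    have hadd := hq.add_convexOn hsumbar
    have hfeq : f = fun x => (1/2 : ℝ) * ‖x - b‖ ^ 2 + (μ/β) * ∑ i, -Real.log (-(φ i x)) := by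
      rw [hf]; funext x; rw [Finset.sum_neg_distrib]; ring
    rw [hfeq]
    exact hadd
  have hconvf : ConvexOn ℝ C f := hstrict.convexOn
  have hx₀minOn : IsMinOn f C x₀ := isMinOn_iff.mpr hminC
  -- gradient of f on C
  have hgradf : ∀ x ∈ C,
      HasGradientAt f (x - b - (μ / β) • ∑ i, (φ i x)⁻¹ • gradient (φ i) x) x := by
    intro x hx
    rw [hf]
    have hq : HasFDerivAt (fun y : EuclideanSpace ℝ (Fin n) => (1/2 : ℝ) * ‖y - b‖ ^ 2)
        ((1/2 : ℝ) • (2 • (innerSL ℝ (x - b)).comp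
          (ContinuousLinearMap.id ℝ (EuclideanSpace ℝ (Fin n))))) x :=
      (((hasFDerivAt_id x).sub_const b).norm_sq).const_mul (1/2)
    have hlog : ∀ i, HasFDerivAt (fun y : EuclideanSpace ℝ (Fin n) => Real.log (-(φ i y)))
        ((-(φ i x))⁻¹ • (-(InnerProductSpace.toDual ℝ (EuclideanSpace ℝ (Fin n))
          (gradient (φ i) x)))) x := by
      intro i
      have hneg : HasFDerivAt (fun y => -(φ i y))
          (-(InnerProductSpace.toDual ℝ (EuclideanSpace ℝ (Fin n)) (gradient (φ i) x))) x :=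
        ((hgradφ i x).hasFDerivAt).neg
      have hpos : -(φ i x) ≠ 0 := ne_of_gt (neg_pos.2 (hx i))
      exact (Real.hasDerivAt_log hpos).comp_hasFDerivAt x hneg
    have hsum : HasFDerivAt (fun y : EuclideanSpace ℝ (Fin n) => ∑ i, Real.log (-(φ i y)))
        (∑ i, (-(φ i x))⁻¹ • (-(InnerProductSpace.toDual ℝ (EuclideanSpace ℝ (Fin n))
          (gradient (φ i) x)))) x :=
      HasFDerivAt.fun_sum fun i _ => hlog i
    have hmain : HasFDerivAt
        (fun y : EuclideanSpace ℝ (Fin n) =>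
          (1 / 2) * ‖y - b‖ ^ 2 - (μ / β) * ∑ i, Real.log (-(φ i y)))
        (((1/2 : ℝ) • (2 • (innerSL ℝ (x - b)).comp
            (ContinuousLinearMap.id ℝ (EuclideanSpace ℝ (Fin n)))))
          - (μ/β) • (∑ i, (-(φ i x))⁻¹ • (-(InnerProductSpace.toDual ℝ
              (EuclideanSpace ℝ (Fin n)) (gradient (φ i) x))))) x :=
      hq.sub (hsum.const_mul (μ/β))
    rw [hasGradientAt_iff_hasFDerivAt]
    have heq : InnerProductSpace.toDual ℝ (EuclideanSpace ℝ (Fin n))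
        (x - b - (μ / β) • ∑ i, (φ i x)⁻¹ • gradient (φ i) x)
        = (((1/2 : ℝ) • (2 • (innerSL ℝ (x - b)).comp
            (ContinuousLinearMap.id ℝ (EuclideanSpace ℝ (Fin n)))))
          - (μ/β) • (∑ i, (-(φ i x))⁻¹ • (-(InnerProductSpace.toDual ℝ
              (EuclideanSpace ℝ (Fin n)) (gradient (φ i) x))))) := by
      apply ContinuousLinearMap.ext
      intro v
      simp only [InnerProductSpace.toDual_apply_apply, ContinuousLinearMap.sub_apply,
        ContinuousLinearMap.smul_apply, ContinuousLinearMap.sum_apply,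
        ContinuousLinearMap.neg_apply, ContinuousLinearMap.coe_comp', Function.comp_apply,
        ContinuousLinearMap.coe_id', id_eq, innerSL_apply_apply, inner_sub_left,
        real_inner_smul_left, sum_inner, inv_neg, smul_eq_mul, neg_mul, mul_neg, neg_neg]
      ring_nf
    rw [heq]
    exact hmain
  refine ⟨x₀, hx₀C, hminC, ?_, ?_⟩
  · intro x hx hxmin
    exact hstrict.eq_of_isMinOn (isMinOn_iff.mpr hxmin) hx₀minOn hx hx₀C
  · intro x hx
    constructor
    · intro hzero
      have hg0 : HasGradientAt f (0 : EuclideanSpace ℝ (Fin n)) x := hzero ▸ hgradf x hx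
      have hmin : ∀ y ∈ C, f x ≤ f y := by
        intro y hy
        have h := grad_ineq_s19 hconvf hx hy hg0
        simpa using h
      exact hstrict.eq_of_isMinOn (isMinOn_iff.mpr hmin) hx₀minOn hx hx₀C
    · rintro rfl
      have hloc : IsLocalMin f x := hx₀minOn.isLocalMin (hCopen.mem_nhds hx)
      have h1 : fderiv ℝ f x = 0 := hloc.fderiv_eq_zero
      have h2 := (hgradf x hx).hasFDerivAt.fderiv
      rw [h1] at h2
      have h3 : InnerProductSpace.toDual ℝ (EuclideanSpace ℝ (Fin n))
          (x - b - (μ / β) • ∑ i, (φ i x)⁻¹ • gradient (φ i) x)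
          = InnerProductSpace.toDual ℝ (EuclideanSpace ℝ (Fin n)) 0 := by
        rw [map_zero]; exact h2.symm
      exact (InnerProductSpace.toDual ℝ (EuclideanSpace ℝ (Fin n))).injective h3
end
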